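/- Let g : [0, π/3] → ℝ be continuous and strictly positive. For any slope k ∈ ℝ, let h(ε) = G(ε, kε) be the restriction of G = q/g(θ) to the line through the origin of direction (1,k) in the (S₁,S₂)-plane. Then h has one-sided derivatives at ε = 0 satisfying h′₋(0) < 0 < h′₊(0); explicitly, h′₊(0) = √3·√(1+k+k²)/g(θ₊) and h′₋(0) = −√3·√(1+k+k²)/g(θ₋), where θ₊ and θ₋ are the (constant) values of θ on the two open half-lines. Hence the nonsmoothness of G along the hydrostatic axis S₁ = S₂ = 0 never violates convexity of the restriction of G to any line through the origin. -/

import Mathlib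

/-- The deviatoric stress invariant q(S₁,S₂) = √(3(S₁² + S₁S₂ + S₂²)), with S₃ = −S₁−S₂. -/
noncomputable def qf (S : ℝ × ℝ) : ℝ :=
  Real.sqrt (3 * (S.1 ^ 2 + S.1 * S.2 + S.2 ^ 2))

/-- The Lode angle θ(S₁,S₂) = (1/3)·arccos((27/2)·S₁S₂S₃/q³) ∈ [0, π/3], S₃ = −S₁−S₂. -/
noncomputable def θf (S : ℝ × ℝ) : ℝ :=
  (1 / 3) * Real.arccos ((27 / 2) * (S.1 * S.2 * (-S.1 - S.2)) / (qf S) ^ 3)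

/-- The deviatoric yield function G(S₁,S₂) = q(S₁,S₂)/g(θ(S₁,S₂)) (equal to 0 at the
origin, where q = 0). -/
noncomputable def Gf (g : ℝ → ℝ) (S : ℝ × ℝ) : ℝ :=
  qf S / g (θf S)

/-- the restriction h(ε) = G(ε, kε) of G = q/g(θ) to any line through the
origin has one-sided derivatives at ε = 0 equal to ±√3·√(1+k+k²)/g(θ±), where θ± are the
constant values of θ on the two open half-lines, and h′₋(0) < 0 < h′₊(0); hence the
nonsmoothness along the hydrostatic axis never violates convexity of the restriction. -/
theorem one_sided_derivs_through_origin
    (g : ℝ → ℝ)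
    (hgc : ContinuousOn g (Set.Icc 0 (Real.pi / 3)))
    (hgpos : ∀ t ∈ Set.Icc 0 (Real.pi / 3), 0 < g t)
    (k : ℝ) :
    HasDerivWithinAt (fun ε : ℝ => Gf g (ε, k * ε))
      (Real.sqrt 3 * Real.sqrt (1 + k + k ^ 2) / g (θf (1, k))) (Set.Ici 0) 0 ∧
    HasDerivWithinAt (fun ε : ℝ => Gf g (ε, k * ε))
      (-(Real.sqrt 3 * Real.sqrt (1 + k + k ^ 2)) / g (θf (-1, -k))) (Set.Iic 0) 0 ∧
    -(Real.sqrt 3 * Real.sqrt (1 + k + k ^ 2)) / g (θf (-1, -k)) < 0 ∧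
    0 < Real.sqrt 3 * Real.sqrt (1 + k + k ^ 2) / g (θf (1, k)) := by
  have hk : 0 < 1 + k + k ^ 2 := by nlinarith [sq_nonneg (2 * k + 1)]
  set c := Real.sqrt (3 * (1 + k + k ^ 2)) with hcdef
  have hc : 0 < c := Real.sqrt_pos.mpr (by linarith)
  have hc3 : c = Real.sqrt 3 * Real.sqrt (1 + k + k ^ 2) := Real.sqrt_mul (by norm_num) _
  have hθmem : ∀ S : ℝ × ℝ, θf S ∈ Set.Icc 0 (Real.pi / 3) := by
    intro S
    unfold θf
    have h1 := Real.arccos_nonneg ((27 / 2) * (S.1 * S.2 * (-S.1 - S.2)) / (qf S) ^ 3)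
    have h2 := Real.arccos_le_pi ((27 / 2) * (S.1 * S.2 * (-S.1 - S.2)) / (qf S) ^ 3)
    constructor <;> [linarith; linarith]
  have hgp : 0 < g (θf (1, k)) := hgpos _ (hθmem (1, k))
  have hgm : 0 < g (θf (-1, -k)) := hgpos _ (hθmem (-1, -k))
  have hq1 : qf (1, k) = c := by
    unfold qf; simp only
    rw [show (1 : ℝ) ^ 2 + 1 * k + k ^ 2 = 1 + k + k ^ 2 by ring]
  have hqm1 : qf (-1, -k) = c := by
    unfold qf; simp only
    rw [show (-1 : ℝ) ^ 2 + (-1) * (-k) + (-k) ^ 2 = 1 + k + k ^ 2 by ring]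
  have hG0 : Gf g (0, k * 0) = 0 := by
    unfold Gf qf; simp
  -- positive side
  have hqpos : ∀ ε : ℝ, 0 < ε → qf (ε, k * ε) = ε * c := by
    intro ε hε
    unfold qf; simp only
    have h3 : 3 * (ε ^ 2 + ε * (k * ε) + (k * ε) ^ 2) = ε ^ 2 * (3 * (1 + k + k ^ 2)) := by
      ring
    rw [h3, Real.sqrt_mul (sq_nonneg ε), Real.sqrt_sq hε.le]
  have hθpos : ∀ ε : ℝ, 0 < ε → θf (ε, k * ε) = θf (1, k) := by
    intro ε hε
    unfold θf
    congr 1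
    rw [show ((ε, k * ε) : ℝ × ℝ).1 = ε from rfl, show ((ε, k * ε) : ℝ × ℝ).2 = k * ε from rfl,
      hqpos ε hε, hq1]
    simp only
    congr 1
    field_simp [ne_of_gt hε, ne_of_gt hc]
  have hEqPos : Set.EqOn (fun ε : ℝ => Gf g (ε, k * ε))
      (fun ε : ℝ => ε * (c / g (θf (1, k)))) (Set.Ici 0) := by
    intro ε hε
    rcases eq_or_lt_of_le (Set.mem_Ici.mp hε) with h | h
    · rw [← h]; show Gf g (0, k * 0) = 0 * _; rw [zero_mul]; exact hG0
    · simp only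
      unfold Gf
      rw [hqpos ε h, hθpos ε h, mul_div_assoc]
  -- negative side
  have hqneg : ∀ ε : ℝ, ε < 0 → qf (ε, k * ε) = -ε * c := by
    intro ε hε
    unfold qf; simp only
    have h3 : 3 * (ε ^ 2 + ε * (k * ε) + (k * ε) ^ 2) = ε ^ 2 * (3 * (1 + k + k ^ 2)) := by
      ring
    rw [h3, Real.sqrt_mul (sq_nonneg ε), Real.sqrt_sq_eq_abs, abs_of_neg hε]
  have hθneg : ∀ ε : ℝ, ε < 0 → θf (ε, k * ε) = θf (-1, -k) := by
    intro ε hε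
    unfold θf
    congr 1
    rw [show ((ε, k * ε) : ℝ × ℝ).1 = ε from rfl, show ((ε, k * ε) : ℝ × ℝ).2 = k * ε from rfl,
      hqneg ε hε, hqm1]
    simp only
    congr 1
    field_simp [ne_of_lt hε, ne_of_gt hc]
    ring
  have hEqNeg : Set.EqOn (fun ε : ℝ => Gf g (ε, k * ε))
      (fun ε : ℝ => ε * (-c / g (θf (-1, -k)))) (Set.Iic 0) := by
    intro ε hε
    rcases eq_or_lt_of_le (Set.mem_Iic.mp hε) with h | h
    · rw [h]; show Gf g (0, k * 0) = 0 * _; rw [zero_mul]; exact hG0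
    · simp only
      unfold Gf
      rw [hqneg ε h, hθneg ε h]
      ring
  have hlin : ∀ a : ℝ, HasDerivWithinAt (fun ε : ℝ => ε * a) a (Set.Ici 0) 0 ∧
      HasDerivWithinAt (fun ε : ℝ => ε * a) a (Set.Iic 0) 0 := by
    intro a
    have h : HasDerivAt (fun ε : ℝ => ε * a) (1 * a) 0 := (hasDerivAt_id 0).mul_const a
    rw [one_mul] at h
    exact ⟨h.hasDerivWithinAt, h.hasDerivWithinAt⟩
  refine ⟨?_, ?_, ?_, ?_⟩
  · rw [← hc3]
    exact ((hlin (c / g (θf (1, k)))).1).congr hEqPos (by simpa using hG0)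
  · have : -(Real.sqrt 3 * Real.sqrt (1 + k + k ^ 2)) / g (θf (-1, -k)) =
        -c / g (θf (-1, -k)) := by rw [hc3]
    rw [this]
    exact ((hlin (-c / g (θf (-1, -k)))).2).congr hEqNeg (by simpa using hG0)
  · rw [← hc3]
    exact div_neg_of_neg_of_pos (neg_neg_iff_pos.mpr hc) hgm
  · rw [← hc3]
    exact div_pos hc hgp
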